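/- If a vertex v of a finite simplicial complex K is dominated by a vertex v', then the inclusion of K \ {v} (the subcomplex induced on all vertices other than v) into K is a homotopy equivalence. -/

import Mathlib

open Finset

/-- The geometric realization of the simplicial complex with face predicate `F`. -/
def realizationSet {V : Type*} [Fintype V] (F : Finset V → Prop) : Set (V → ℝ) :=
  {f | (∀ v, 0 ≤ f v) ∧ (∑ v, f v = 1) ∧ ∃ σ : Finset V, F σ ∧ ∀ v, f v ≠ 0 → v ∈ σ}


section Aux
variable {V : Type*} [Fintype V] [DecidableEq V]

/-- Push the mass of `v` onto `v'`. -/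
noncomputable def rmapAux (v v' : V) (f : V → ℝ) : V → ℝ :=
  fun w => if w = v then 0 else if w = v' then f v' + f v else f w

lemma sum_split (v v' : V) (hne : v' ≠ v) (g : V → ℝ) :
    ∑ w, g w = g v + (g v' + ∑ w ∈ (univ.erase v).erase v', g w) := by
  rw [← Finset.add_sum_erase _ g (mem_univ v),
    ← Finset.add_sum_erase _ g (mem_erase.mpr ⟨hne, mem_univ v'⟩)]

lemma sum_rmapAux (v v' : V) (hne : v' ≠ v) (f : V → ℝ) :
    ∑ w, rmapAux v v' f w = ∑ w, f w := by
  rw [sum_split v v' hne (rmapAux v v' f), sum_split v v' hne f]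
  have h1 : rmapAux v v' f v = 0 := by simp [rmapAux]
  have h2 : rmapAux v v' f v' = f v' + f v := by simp [rmapAux, hne]
  have h3 : ∑ w ∈ (univ.erase v).erase v', rmapAux v v' f w
      = ∑ w ∈ (univ.erase v).erase v', f w := by
    apply Finset.sum_congr rfl
    intro w hw
    simp only [mem_erase] at hw
    simp [rmapAux, hw.1, hw.2.1]
  rw [h1, h2, h3]; ring

lemma rmapAux_mem (K : Finset V → Prop)
    (hdown : ∀ σ τ : Finset V, K σ → τ ⊆ σ → K τ)
    (v v' : V) (hne : v' ≠ v)
    (hdom : ∀ σ : Finset V, K σ → v ∈ σ → K (insert v' σ))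
    {f : V → ℝ} (hf : f ∈ realizationSet K) :
    rmapAux v v' f ∈ realizationSet (fun σ : Finset V => K σ ∧ v ∉ σ) := by
  obtain ⟨hpos, hsum, σ, hσ, hsupp⟩ := hf
  refine ⟨?_, ?_, ?_⟩
  · intro w
    unfold rmapAux
    split_ifs with h1 h2
    · exact le_refl 0
    · exact add_nonneg (hpos v') (hpos v)
    · exact hpos w
  · rw [sum_rmapAux v v' hne f]; exact hsum
  · by_cases hv : v ∈ σ
    · refine ⟨(insert v' σ).erase v, ⟨hdown _ _ (hdom σ hσ hv) (erase_subset _ _),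
        notMem_erase _ _⟩, ?_⟩
      intro w hw
      unfold rmapAux at hw
      split_ifs at hw with h1 h2
      · exact absurd rfl hw
      · rw [h2]; exact mem_erase.mpr ⟨hne, mem_insert_self _ _⟩
      · exact mem_erase.mpr ⟨h1, mem_insert_of_mem (hsupp w hw)⟩
    · have hfv : f v = 0 := by
        by_contra h; exact hv (hsupp v h)
      refine ⟨σ.erase v, ⟨hdown _ _ hσ (erase_subset _ _), notMem_erase _ _⟩, ?_⟩
      intro w hw
      unfold rmapAux at hw
      split_ifs at hw with h1 h2
      · exact absurd rfl hw
      · rw [hfv, add_zero] at hw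
        rw [h2]
        exact mem_erase.mpr ⟨hne, hsupp v' hw⟩
      · exact mem_erase.mpr ⟨h1, hsupp w hw⟩

lemma comb_mem (K : Finset V → Prop)
    (hdown : ∀ σ τ : Finset V, K σ → τ ⊆ σ → K τ)
    (v v' : V) (hne : v' ≠ v)
    (hdom : ∀ σ : Finset V, K σ → v ∈ σ → K (insert v' σ))
    {f : V → ℝ} (hf : f ∈ realizationSet K) {a b : ℝ}
    (ha : 0 ≤ a) (hb : 0 ≤ b) (hab : a + b = 1) :
    (fun w => a * rmapAux v v' f w + b * f w) ∈ realizationSet K := by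
  obtain ⟨hpos, hsum, σ, hσ, hsupp⟩ := hf
  have hr : ∀ w, 0 ≤ rmapAux v v' f w := by
    intro w; unfold rmapAux
    split_ifs
    · exact le_refl 0
    · exact add_nonneg (hpos v') (hpos v)
    · exact hpos _
  refine ⟨fun w => add_nonneg (mul_nonneg ha (hr w)) (mul_nonneg hb (hpos w)), ?_, ?_⟩
  · rw [Finset.sum_add_distrib, ← Finset.mul_sum, ← Finset.mul_sum,
      sum_rmapAux v v' hne f, hsum]
    linarith
  · by_cases hv : v ∈ σ
    · refine ⟨insert v' σ, hdom σ hσ hv, ?_⟩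
      intro w hw
      have : rmapAux v v' f w ≠ 0 ∨ f w ≠ 0 := by
        by_contra h
        push_neg at h
        exact hw (by simp only [h.1, h.2, mul_zero, add_zero])
      rcases this with h | h
      · unfold rmapAux at h
        split_ifs at h with h1 h2
        · exact absurd rfl h
        · rw [h2]; exact mem_insert_self _ _
        · exact mem_insert_of_mem (hsupp w h)
      · exact mem_insert_of_mem (hsupp w h)
    · have hfv : f v = 0 := by by_contra h; exact hv (hsupp v h)
      refine ⟨σ, hσ, ?_⟩
      intro w hw
      have : rmapAux v v' f w ≠ 0 ∨ f w ≠ 0 := by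
        by_contra h
        push_neg at h
        exact hw (by simp only [h.1, h.2, mul_zero, add_zero])
      rcases this with h | h
      · unfold rmapAux at h
        split_ifs at h with h1 h2
        · exact absurd rfl h
        · rw [hfv, add_zero] at h; rw [h2]; exact hsupp v' h
        · exact hsupp w h
      · exact hsupp w h

end Aux


theorem dominated_removal_homotopyEquiv {V : Type*} [Fintype V] [DecidableEq V]
    (K : Finset V → Prop)
    (hdown : ∀ σ τ : Finset V, K σ → τ ⊆ σ → K τ)
    (v v' : V) (hne : v' ≠ v)
    (hdom : ∀ σ : Finset V, K σ → v ∈ σ → K (insert v' σ)) :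
    ∃ h : ContinuousMap.HomotopyEquiv
        (realizationSet (fun σ : Finset V => K σ ∧ v ∉ σ)) (realizationSet K),
      ∀ x : realizationSet (fun σ : Finset V => K σ ∧ v ∉ σ),
        ((h.toFun x : V → ℝ)) = (x : V → ℝ) := by
  classical
  set A := realizationSet (fun σ : Finset V => K σ ∧ v ∉ σ) with hA
  set B := realizationSet K with hB
  -- inclusion
  have hAB : ∀ f ∈ A, f ∈ B := by
    rintro f ⟨h1, h2, σ, ⟨hσ, _⟩, hs⟩
    exact ⟨h1, h2, σ, hσ, hs⟩
  have hAv : ∀ f ∈ A, f v = 0 := by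
    rintro f ⟨h1, h2, σ, ⟨hσ, hvσ⟩, hs⟩
    by_contra h
    exact hvσ (hs v h)
  let incl : C(A, B) := ⟨fun x => ⟨x, hAB x x.2⟩, by
    apply Continuous.subtype_mk
    exact continuous_subtype_val⟩
  have hcB : ∀ u : V, Continuous fun a : B => (a : V → ℝ) u :=
    fun u => (continuous_apply u).comp continuous_subtype_val
  let retr : C(B, A) := ⟨fun x => ⟨rmapAux v v' x, rmapAux_mem K hdown v v' hne hdom x.2⟩, by
    apply Continuous.subtype_mk
    apply continuous_pi
    intro w
    unfold rmapAux
    split_ifs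
    · exact continuous_const
    · exact (hcB v').add (hcB v)
    · exact hcB w⟩
  -- retr ∘ incl = id
  have hri : retr.comp incl = ContinuousMap.id A := by
    ext x w
    simp only [ContinuousMap.comp_apply, ContinuousMap.id_apply, retr, incl]
    show rmapAux v v' (x : V → ℝ) w = (x : V → ℝ) w
    unfold rmapAux
    split_ifs with h1 h2
    · subst h1; exact (hAv x x.2).symm
    · subst h2; rw [hAv x x.2, add_zero]
    · rfl
  -- homotopy incl ∘ retr ≃ id
  let H : ContinuousMap.Homotopy (incl.comp retr) (ContinuousMap.id B) :=
    { toFun := fun p => ⟨fun w => (1 - (p.1 : ℝ)) * rmapAux v v' (p.2 : V → ℝ) w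
        + (p.1 : ℝ) * (p.2 : V → ℝ) w,
        comb_mem K hdown v v' hne hdom p.2.2 (by
          have := p.1.2.2; linarith) p.1.2.1 (by ring)⟩
      continuous_toFun := by
        have hc1 : Continuous fun a : (unitInterval × B) => (a.1 : ℝ) :=
          continuous_subtype_val.comp continuous_fst
        have hc2 : ∀ u : V, Continuous fun a : (unitInterval × B) => (a.2 : V → ℝ) u :=
          fun u => (continuous_apply u).comp (continuous_subtype_val.comp continuous_snd)
        apply Continuous.subtype_mk
        apply continuous_pi
        intro w
        unfold rmapAux
        split_ifs
        · exact (((continuous_const.sub hc1).mul continuous_const)).add (hc1.mul (hc2 w))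
        · exact (((continuous_const.sub hc1).mul ((hc2 v').add (hc2 v)))).add (hc1.mul (hc2 w))
        · exact (((continuous_const.sub hc1).mul (hc2 w))).add (hc1.mul (hc2 w))
      map_zero_left := by
        intro x
        ext w
        simp [incl, retr]
      map_one_left := by
        intro x
        ext w
        simp }
  refine ⟨⟨incl, retr, ⟨hri ▸ ContinuousMap.Homotopy.refl _⟩, ⟨H⟩⟩, fun x => rfl⟩
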